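/- arXiv:2304.12120 — 2 statements merged into one kernel-verified Lean document; each statement's English description precedes it below -/
import Mathlib

section
/- Let $X$ be a ball quasi-Banach function space on $\mathbb{R}^n$, $q \in [1,\infty)$, $d \in \mathbb{Z}_+$, and $s \in (0,\infty)$. For $f \in L^q_{loc}(\mathbb{R}^n)$, define $\|f\|_{\mathcal{L}}$ as the supremum over finite families ($m \in \mathbb{N}$, balls $B^{(1)},\dots,B^{(m)}$, weights $\lambda_1,\dots,\lambda_m \ge 0$ with $\sum \lambda_j \neq 0$), and $\widetilde{\|f\|}_{\mathcal{L}}$ as the analogous supremum over countable families $\{B^{(j)}\}_{j\in\mathbb{N}}$, $\{\lambda_j\}_{j\in\mathbb{N}}$ with $0 < \left\|\left\{\sum_j (\lambda_j/\|\mathbf{1}_{B^{(j)}}\|_X)^s \mathbf{1}_{B^{(j)}}\right\}^{1/s}\right\|_X < \infty$, of the quantity $\left\|\left\{\sum_i (\lambda_i/\|\mathbf{1}_{B^{(i)}}\|_X)^s \mathbf{1}_{B^{(i)}}\right\}^{1/s}\right\|_X^{-1} \sum_j \frac{\lambda_j |B^{(j)}|}{\|\mathbf{1}_{B^{(j)}}\|_X}\left(\frac{1}{|B^{(j)}|}\int_{B^{(j)}}|f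 - P^d_{B^{(j)}}f|^q\right)^{1/q}$. Then $\|f\|_{\mathcal{L}} = \widetilde{\|f\|}_{\mathcal{L}}$. -/
open MeasureTheory ENNReal

/-- The summand `λ_j |B_j| / ‖1_{B_j}‖_X · (⨍_{B_j} |f - P^d_{B_j} f|^q)^{1/q}`
appearing in the anisotropic ball Campanato quasi-norm. -/
noncomputable def camTerm {n : ℕ} (q : ℝ) (N : ((Fin n → ℝ) → ENNReal) → ENNReal)
    (f : (Fin n → ℝ) → ℝ) (P : Set (Fin n → ℝ) → (Fin n → ℝ) → ℝ)
    (B : Set (Fin n → ℝ)) (l : NNReal) : ENNReal :=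
  (l : ENNReal) * volume B / N (Set.indicator B fun _ => 1) *
    ENNReal.ofReal ((⨍ x in B, |f x - P B x| ^ q ∂volume) ^ (1 / q))

/-- The building block `(λ/‖1_B‖_X)^s · 1_B` of the weight function in the
anisotropic ball Campanato quasi-norm. -/
noncomputable def camWeight {n : ℕ} (s : ℝ) (N : ((Fin n → ℝ) → ENNReal) → ENNReal)
    (B : Set (Fin n → ℝ)) (l : NNReal) : (Fin n → ℝ) → ENNReal :=
  fun x => ((l : ENNReal) / N (Set.indicator B fun _ => 1)) ^ s *
    Set.indicator B (fun _ => (1 : ENNReal)) x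

lemma camWeight_zero {n : ℕ} (s : ℝ) (hs : 0 < s)
    (N : ((Fin n → ℝ) → ENNReal) → ENNReal) (B : Set (Fin n → ℝ)) (x : Fin n → ℝ) :
    camWeight s N B 0 x = 0 := by
  simp [camWeight, ENNReal.zero_rpow_of_pos hs]

lemma camTerm_zero {n : ℕ} (q : ℝ) (N : ((Fin n → ℝ) → ENNReal) → ENNReal)
    (f : (Fin n → ℝ) → ℝ) (P : Set (Fin n → ℝ) → (Fin n → ℝ) → ℝ)
    (B : Set (Fin n → ℝ)) : camTerm q N f P B 0 = 0 := by
  simp [camTerm]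

/-- For a ball quasi-Banach function space `X` (quasi-norm `N` on
nonnegative functions, with the lattice, Fatou, and homogeneity properties, indicators of
dilated balls having quasi-norm in `(0, ∞)`), `q ∈ [1, ∞)`, `d ∈ ℤ₊`, `s ∈ (0, ∞)`, and
`f ∈ L^q_loc`, the Campanato quasi-norm defined via finite families of dilated balls and
weights equals the analogous supremum over countable families whose weight function has
quasi-norm in `(0, ∞)`. -/
theorem stmt_11 (n d : ℕ) (q s : ℝ) (hq : 1 ≤ q) (hs : 0 < s)
    (N : ((Fin n → ℝ) → ENNReal) → ENNReal)
    (Balls : Set (Set (Fin n → ℝ)))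
    (hBmeas : ∀ B ∈ Balls, MeasurableSet B ∧ 0 < volume B ∧ volume B < ⊤)
    (hBpos : ∀ B ∈ Balls, 0 < N (Set.indicator B fun _ => 1))
    (hBfin : ∀ B ∈ Balls, N (Set.indicator B fun _ => 1) < ⊤)
    (hmono : ∀ F G : (Fin n → ℝ) → ENNReal,
      (∀ᵐ x ∂(volume : Measure (Fin n → ℝ)), F x ≤ G x) → N F ≤ N G)
    (hhom : ∀ (c : ENNReal) (F : (Fin n → ℝ) → ENNReal), c ≠ ⊤ →
      N (fun x => c * F x) = c * N F)
    (hfatou : ∀ (F : ℕ → (Fin n → ℝ) → ENNReal) (G : (Fin n → ℝ) → ENNReal),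
      (∀ x, Monotone fun m => F m x) → (∀ x, (⨆ m, F m x) = G x) →
      (⨆ m, N (F m)) = N G)
    (f : (Fin n → ℝ) → ℝ)
    (hf : ∀ B ∈ Balls, Integrable (fun x => |f x| ^ q) (volume.restrict B))
    (P : Set (Fin n → ℝ) → (Fin n → ℝ) → ℝ)
    (hP : ∀ B ∈ Balls, ∃ Q : MvPolynomial (Fin n) ℝ, Q.totalDegree ≤ d ∧
      (∀ x, P B x = MvPolynomial.eval x Q) ∧
      ∀ R : MvPolynomial (Fin n) ℝ, R.totalDegree ≤ d →
        ∫ x in B, (f x - P B x) * MvPolynomial.eval x R ∂volume = 0) :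
    sSup {c : ENNReal | ∃ (m : ℕ) (Bf : ℕ → Set (Fin n → ℝ)) (lam : ℕ → NNReal),
        (∀ i, Bf i ∈ Balls) ∧ (∑ j ∈ Finset.range m, lam j) ≠ 0 ∧
        c = (N (fun x => (∑ i ∈ Finset.range m, camWeight s N (Bf i) (lam i) x) ^ (1 / s)))⁻¹ *
              ∑ j ∈ Finset.range m, camTerm q N f P (Bf j) (lam j)} =
    sSup {c : ENNReal | ∃ (Bf : ℕ → Set (Fin n → ℝ)) (lam : ℕ → NNReal),
        (∀ i, Bf i ∈ Balls) ∧
        0 < N (fun x => (∑' i, camWeight s N (Bf i) (lam i) x) ^ (1 / s)) ∧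
        N (fun x => (∑' i, camWeight s N (Bf i) (lam i) x) ^ (1 / s)) < ⊤ ∧
        c = (N (fun x => (∑' i, camWeight s N (Bf i) (lam i) x) ^ (1 / s)))⁻¹ *
              ∑' j, camTerm q N f P (Bf j) (lam j)} := by
  have h1s : (0 : ℝ) < 1 / s := one_div_pos.mpr hs
  apply le_antisymm
  · -- finite ≤ countable
    apply sSup_le
    rintro c ⟨m, Bf, lam, hB, hlam, rfl⟩
    set A := N (fun x => (∑ i ∈ Finset.range m, camWeight s N (Bf i) (lam i) x) ^ (1 / s))
      with hAdef
    by_cases hAtop : A = ⊤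
    · rw [hAtop]
      simp
    · -- lower bound : A ≥ lam j0 > 0
      obtain ⟨j0, hj0m, hj0⟩ := Finset.exists_ne_zero_of_sum_ne_zero hlam
      have hNB0 := (hBpos _ (hB j0)).ne'
      have hNBt := (hBfin _ (hB j0)).ne
      set cst : ENNReal := (lam j0 : ENNReal) / N (Set.indicator (Bf j0) fun _ => 1) with hcst
      have hcfin : cst ≠ ⊤ := (ENNReal.div_lt_top ENNReal.coe_ne_top hNB0).ne
      have hlow : (lam j0 : ENNReal) ≤ A := by
        have h1 : N (fun x => cst * Set.indicator (Bf j0) (fun _ => (1 : ENNReal)) x) ≤ A := by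
          apply hmono
          filter_upwards with x
          have h2 : camWeight s N (Bf j0) (lam j0) x ≤
              ∑ i ∈ Finset.range m, camWeight s N (Bf i) (lam i) x :=
            Finset.single_le_sum (f := fun i => camWeight s N (Bf i) (lam i) x)
              (fun i _ => zero_le) hj0m
          have h3 : cst * Set.indicator (Bf j0) (fun _ => (1 : ENNReal)) x =
              (camWeight s N (Bf j0) (lam j0) x) ^ (1 / s) := by
            by_cases hx : x ∈ Bf j0
            · simp only [camWeight, Set.indicator_of_mem hx, mul_one]
              rw [← ENNReal.rpow_mul, mul_one_div_cancel hs.ne', ENNReal.rpow_one]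
            · simp only [camWeight, Set.indicator_of_notMem hx, mul_zero]
              rw [ENNReal.zero_rpow_of_pos h1s]
          rw [h3]
          exact ENNReal.rpow_le_rpow h2 h1s.le
        have h4 : N (fun x => cst * Set.indicator (Bf j0) (fun _ => (1 : ENNReal)) x) =
            (lam j0 : ENNReal) := by
          rw [hhom cst _ hcfin]
          exact ENNReal.div_mul_cancel hNB0 hNBt
        rwa [h4] at h1
      have hApos : 0 < A :=
        lt_of_lt_of_le (by exact_mod_cast pos_iff_ne_zero.mpr hj0) hlow
      apply le_sSup
      refine ⟨Bf, fun j => if j < m then lam j else 0, hB, ?_⟩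
      have hW : (fun x => (∑' i, camWeight s N (Bf i)
            ((fun j => if j < m then lam j else 0) i) x) ^ (1 / s)) =
          (fun x => (∑ i ∈ Finset.range m, camWeight s N (Bf i) (lam i) x) ^ (1 / s)) := by
        funext x
        congr 1
        rw [tsum_eq_sum (s := Finset.range m) (fun i hi => by
          beta_reduce
          rw [if_neg (Nat.not_lt.mpr (by simpa using hi))]
          exact camWeight_zero s hs N (Bf i) x)]
        exact Finset.sum_congr rfl fun i hi => by
          beta_reduce
          rw [if_pos (Finset.mem_range.mp hi)]
      have hT : (∑' j, camTerm q N f P (Bf j) ((fun j => if j < m then lam j else 0) j)) =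
          ∑ j ∈ Finset.range m, camTerm q N f P (Bf j) (lam j) := by
        rw [tsum_eq_sum (s := Finset.range m) (fun i hi => by
          beta_reduce
          rw [if_neg (Nat.not_lt.mpr (by simpa using hi))]
          exact camTerm_zero q N f P (Bf i))]
        exact Finset.sum_congr rfl fun i hi => by
          beta_reduce
          rw [if_pos (Finset.mem_range.mp hi)]
      rw [hW, hT]
      exact ⟨hApos, lt_top_iff_ne_top.mpr hAtop, rfl⟩
  · -- countable ≤ finite
    apply sSup_le
    rintro c ⟨Bf, lam, hB, hpos, hfin, rfl⟩
    set A := N (fun x => (∑' i, camWeight s N (Bf i) (lam i) x) ^ (1 / s)) with hAdef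
    -- N of the zero function vanishes
    have hN0 : N (fun _ => 0) = 0 := by
      have h := hhom 0 (fun _ => 0) (by simp)
      simpa using h
    obtain ⟨j0, hj0⟩ : ∃ j0, lam j0 ≠ 0 := by
      by_contra h
      push_neg at h
      have hz : (fun x => (∑' i, camWeight s N (Bf i) (lam i) x) ^ (1 / s)) =
          (fun _ => (0 : ENNReal)) := by
        funext x
        have : ∀ i, camWeight s N (Bf i) (lam i) x = 0 := fun i => by
          rw [h i]; exact camWeight_zero s hs N (Bf i) x
        rw [tsum_congr this, tsum_zero, ENNReal.zero_rpow_of_pos h1s]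
      rw [hAdef, hz, hN0] at hpos
      exact lt_irrefl 0 hpos
    have key : ∀ m : ℕ,
        A⁻¹ * ∑ j ∈ Finset.range m, camTerm q N f P (Bf j) (lam j) ≤
        sSup {c : ENNReal | ∃ (m : ℕ) (Bf : ℕ → Set (Fin n → ℝ)) (lam : ℕ → NNReal),
          (∀ i, Bf i ∈ Balls) ∧ (∑ j ∈ Finset.range m, lam j) ≠ 0 ∧
          c = (N (fun x => (∑ i ∈ Finset.range m, camWeight s N (Bf i) (lam i) x) ^ (1 / s)))⁻¹ *
              ∑ j ∈ Finset.range m, camTerm q N f P (Bf j) (lam j)} := by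
      intro m
      set M := max m (j0 + 1) with hM
      have hj0M : j0 ∈ Finset.range M :=
        Finset.mem_range.mpr (lt_of_lt_of_le (Nat.lt_succ_self j0) (le_max_right _ _))
      have hAM : N (fun x => (∑ i ∈ Finset.range M, camWeight s N (Bf i) (lam i) x) ^ (1 / s))
          ≤ A := by
        apply hmono
        filter_upwards with x
        exact ENNReal.rpow_le_rpow (ENNReal.sum_le_tsum _) h1s.le
      have hsumne : (∑ j ∈ Finset.range M, lam j) ≠ 0 := by
        intro h
        exact hj0 ((Finset.sum_eq_zero_iff.mp h) j0 hj0M)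
      have hmem : (N (fun x => (∑ i ∈ Finset.range M, camWeight s N (Bf i) (lam i) x) ^ (1 / s)))⁻¹ *
          ∑ j ∈ Finset.range M, camTerm q N f P (Bf j) (lam j) ∈
          {c : ENNReal | ∃ (m : ℕ) (Bf : ℕ → Set (Fin n → ℝ)) (lam : ℕ → NNReal),
          (∀ i, Bf i ∈ Balls) ∧ (∑ j ∈ Finset.range m, lam j) ≠ 0 ∧
          c = (N (fun x => (∑ i ∈ Finset.range m, camWeight s N (Bf i) (lam i) x) ^ (1 / s)))⁻¹ *
              ∑ j ∈ Finset.range m, camTerm q N f P (Bf j) (lam j)} :=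
        ⟨M, Bf, lam, hB, hsumne, rfl⟩
      calc A⁻¹ * ∑ j ∈ Finset.range m, camTerm q N f P (Bf j) (lam j)
          ≤ A⁻¹ * ∑ j ∈ Finset.range M, camTerm q N f P (Bf j) (lam j) :=
            mul_le_mul_right
              (Finset.sum_le_sum_of_subset
                (Finset.range_subset_range.mpr (le_max_left _ _))) _
        _ ≤ (N (fun x => (∑ i ∈ Finset.range M, camWeight s N (Bf i) (lam i) x) ^ (1 / s)))⁻¹ *
              ∑ j ∈ Finset.range M, camTerm q N f P (Bf j) (lam j) :=
            mul_le_mul_left (ENNReal.inv_le_inv' hAM) _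
        _ ≤ _ := le_sSup hmem
    calc A⁻¹ * ∑' j, camTerm q N f P (Bf j) (lam j)
        = ⨆ m, A⁻¹ * ∑ j ∈ Finset.range m, camTerm q N f P (Bf j) (lam j) := by
          rw [ENNReal.tsum_eq_iSup_nat, ENNReal.mul_iSup]
      _ ≤ _ := iSup_le key
end

section
/- Let $X$ be a concave ball quasi-Banach function space, $q \in [1,\infty)$, $d \in \mathbb{Z}_+$, and $s \in (0,1]$. Then the anisotropic ball Campanato-type space $\mathcal{L}^A_{X,q,d,s}(\mathbb{R}^n)$ coincides with the Campanato space $\mathcal{L}^A_{X,q,d}(\mathbb{R}^n)$, with equivalent quasi-norms: there is $C \ge 1$ with $C^{-1}\|f\|_{\mathcal{L}^A_{X,q,d}} \le \|f\|_{\mathcal{L}^A_{X,q,d,s}} \le C\|f\|_{\mathcal{L}^A_{X,q,d}}$ for all $f \in L^q_{loc}$. -/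
open MeasureTheory ENNReal

/-- The ball Campanato quasi-norm `‖f‖_{𝓛^A_{X,q,d,s}}`, a supremum over finite families
of dilated balls and nonnegative weights with `∑ λ_j ≠ 0`. -/
noncomputable def camNormWeighted {n : ℕ} (q s : ℝ)
    (N : ((Fin n → ℝ) → ENNReal) → ENNReal) (Balls : Set (Set (Fin n → ℝ)))
    (f : (Fin n → ℝ) → ℝ) (P : Set (Fin n → ℝ) → (Fin n → ℝ) → ℝ) : ENNReal :=
  sSup {c : ENNReal | ∃ (m : ℕ) (Bf : ℕ → Set (Fin n → ℝ)) (lam : ℕ → NNReal),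
    (∀ i, Bf i ∈ Balls) ∧ (∑ j ∈ Finset.range m, lam j) ≠ 0 ∧
    c = (N (fun x => (∑ i ∈ Finset.range m, camWeight s N (Bf i) (lam i) x) ^ (1 / s)))⁻¹ *
          ∑ j ∈ Finset.range m, camTerm q N f P (Bf j) (lam j)}

/-- The plain Campanato quasi-norm
`‖f‖_{𝓛^A_{X,q,d}} = sup_B |B|/‖1_B‖_X (⨍_B |f - P_B^d f|^q)^{1/q}`. -/
noncomputable def camNormPlain {n : ℕ} (q : ℝ)
    (N : ((Fin n → ℝ) → ENNReal) → ENNReal) (Balls : Set (Set (Fin n → ℝ)))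
    (f : (Fin n → ℝ) → ℝ) (P : Set (Fin n → ℝ) → (Fin n → ℝ) → ℝ) : ENNReal :=
  ⨆ B ∈ Balls, volume B / N (Set.indicator B fun _ => 1) *
    ENNReal.ofReal ((⨍ x in B, |f x - P B x| ^ q ∂volume) ^ (1 / q))

private lemma aux_sum_rpow_le {s : ℝ} (hs : 0 < s) (hs1 : s ≤ 1) (b : ℕ → ENNReal) (m : ℕ) :
    (∑ j ∈ Finset.range m, b j) ^ s ≤ ∑ j ∈ Finset.range m, (b j) ^ s := by
  induction m with
  | zero => simp [ENNReal.zero_rpow_of_pos hs]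
  | succ m ih =>
      rw [Finset.sum_range_succ, Finset.sum_range_succ]
      calc (∑ j ∈ Finset.range m, b j + b m) ^ s
          ≤ (∑ j ∈ Finset.range m, b j) ^ s + (b m) ^ s :=
            ENNReal.rpow_add_le_add_rpow _ _ hs.le hs1
        _ ≤ _ := add_le_add_left ih _

private lemma aux_sum_le_rpow {s : ℝ} (hs : 0 < s) (hs1 : s ≤ 1) (b : ℕ → ENNReal) (m : ℕ) :
    ∑ j ∈ Finset.range m, b j ≤ (∑ j ∈ Finset.range m, (b j) ^ s) ^ (1 / s) := by
  have h1 : (∑ j ∈ Finset.range m, b j) = ((∑ j ∈ Finset.range m, b j) ^ s) ^ (1 / s) := by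
    rw [← ENNReal.rpow_mul, mul_one_div_cancel hs.ne', ENNReal.rpow_one]
  rw [h1]
  exact ENNReal.rpow_le_rpow (aux_sum_rpow_le hs hs1 b m) (by positivity)

/-- If `X` is a *concave* ball quasi-Banach function space, `q ∈ [1, ∞)`,
`d ∈ ℤ₊`, and `s ∈ (0, 1]`, then `𝓛^A_{X,q,d,s}(ℝⁿ) = 𝓛^A_{X,q,d}(ℝⁿ)` with
equivalent quasi-norms. -/
theorem stmt_12 (n d : ℕ) (q s : ℝ) (hq : 1 ≤ q) (hs : 0 < s) (hs1 : s ≤ 1)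
    (N : ((Fin n → ℝ) → ENNReal) → ENNReal)
    (Balls : Set (Set (Fin n → ℝ)))
    (hBmeas : ∀ B ∈ Balls, MeasurableSet B ∧ 0 < volume B ∧ volume B < ⊤)
    (hBpos : ∀ B ∈ Balls, 0 < N (Set.indicator B fun _ => 1))
    (hBfin : ∀ B ∈ Balls, N (Set.indicator B fun _ => 1) < ⊤)
    (hmono : ∀ F G : (Fin n → ℝ) → ENNReal,
      (∀ᵐ x ∂(volume : Measure (Fin n → ℝ)), F x ≤ G x) → N F ≤ N G)
    (hhom : ∀ (c : ENNReal) (F : (Fin n → ℝ) → ENNReal), c ≠ ⊤ →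
      N (fun x => c * F x) = c * N F)
    (hconc : ∃ Cc : ENNReal, 0 < Cc ∧ Cc < ⊤ ∧
      ∀ F : ℕ → (Fin n → ℝ) → ENNReal, ∑' k, N (F k) ≤ Cc * N (fun x => ∑' k, F k x)) :
    ∃ C : ENNReal, 1 ≤ C ∧ C < ⊤ ∧
      ∀ (f : (Fin n → ℝ) → ℝ),
        (∀ B ∈ Balls, Integrable (fun x => |f x| ^ q) (volume.restrict B)) →
        ∀ P : Set (Fin n → ℝ) → (Fin n → ℝ) → ℝ,
        (∀ B ∈ Balls, ∃ Q : MvPolynomial (Fin n) ℝ, Q.totalDegree ≤ d ∧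
          (∀ x, P B x = MvPolynomial.eval x Q) ∧
          ∀ R : MvPolynomial (Fin n) ℝ, R.totalDegree ≤ d →
            ∫ x in B, (f x - P B x) * MvPolynomial.eval x R ∂volume = 0) →
        camNormPlain q N Balls f P ≤ C * camNormWeighted q s N Balls f P ∧
        camNormWeighted q s N Balls f P ≤ C * camNormPlain q N Balls f P := by
  obtain ⟨Cc, hCc0, hCcT, hCc⟩ := hconc
  refine ⟨max 1 Cc, le_max_left _ _, max_lt one_lt_top hCcT, ?_⟩
  intro f _ P _
  constructor
  · -- plain ≤ C * weighted : each single ball gives an element of the sup set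
    have hplain : camNormPlain q N Balls f P ≤ camNormWeighted q s N Balls f P := by
      refine iSup₂_le fun B hB => ?_
      have hNB0 : N (Set.indicator B fun _ => 1) ≠ 0 := (hBpos B hB).ne'
      have hNBT : N (Set.indicator B fun _ => 1) ≠ ⊤ := (hBfin B hB).ne
      apply le_sSup
      refine ⟨1, fun _ => B, fun _ => 1, fun _ => hB, by simp, ?_⟩
      have hw : (fun x => (∑ i ∈ Finset.range 1,
          camWeight s N ((fun _ => B) i) ((fun _ => (1:NNReal)) i) x) ^ (1 / s)) =
          fun x => (N (Set.indicator B fun _ => 1))⁻¹ *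
            Set.indicator B (fun _ => (1:ENNReal)) x := by
        funext x
        simp only [Finset.sum_range_one, camWeight, NNReal.coe_one, ENNReal.coe_one]
        by_cases hx : x ∈ B
        · simp only [Set.indicator_of_mem hx, mul_one, ← ENNReal.rpow_mul, one_div,
            mul_inv_cancel₀ hs.ne', ENNReal.rpow_one]
        · simp [Set.indicator_of_notMem hx, hs,
            ENNReal.zero_rpow_of_pos (by positivity : (0:ℝ) < 1/s)]
      rw [hw, hhom _ _ (ENNReal.inv_ne_top.mpr hNB0), ENNReal.inv_mul_cancel hNB0 hNBT]
      simp [camTerm]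
    calc camNormPlain q N Balls f P ≤ camNormWeighted q s N Balls f P := hplain
      _ ≤ max 1 Cc * camNormWeighted q s N Balls f P :=
          le_mul_of_one_le_left zero_le (le_max_left _ _)
  · -- weighted ≤ C * plain
    have hmain : camNormWeighted q s N Balls f P ≤ Cc * camNormPlain q N Balls f P := by
      refine sSup_le ?_
      rintro c ⟨m, Bf, lam, hBf, _, rfl⟩
      set NP := camNormPlain q N Balls f P
      set W : (Fin n → ℝ) → ENNReal :=
        fun x => (∑ i ∈ Finset.range m, camWeight s N (Bf i) (lam i) x) ^ (1 / s) with hW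
      -- bound the sum of terms
      have hterm : ∀ j, camTerm q N f P (Bf j) (lam j) ≤ (lam j : ENNReal) * NP := by
        intro j
        have hle : volume (Bf j) / N (Set.indicator (Bf j) fun _ => 1) *
            ENNReal.ofReal ((⨍ x in Bf j, |f x - P (Bf j) x| ^ q ∂volume) ^ (1 / q)) ≤ NP := by
          exact le_iSup₂_of_le (Bf j) (hBf j) le_rfl
        calc camTerm q N f P (Bf j) (lam j)
            = (lam j : ENNReal) * (volume (Bf j) / N (Set.indicator (Bf j) fun _ => 1) *
              ENNReal.ofReal ((⨍ x in Bf j, |f x - P (Bf j) x| ^ q ∂volume) ^ (1 / q))) := by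
              rw [camTerm, mul_div_assoc, mul_assoc]
          _ ≤ (lam j : ENNReal) * NP := mul_le_mul_right hle _
      have hsum : ∑ j ∈ Finset.range m, camTerm q N f P (Bf j) (lam j) ≤
          (∑ j ∈ Finset.range m, (lam j : ENNReal)) * NP := by
        rw [Finset.sum_mul]
        exact Finset.sum_le_sum fun j _ => hterm j
      -- concavity: ∑ λ_j ≤ Cc * N W
      set F : ℕ → (Fin n → ℝ) → ENNReal := fun k x =>
        if k < m then ((lam k : ENNReal) / N (Set.indicator (Bf k) fun _ => 1)) *
          Set.indicator (Bf k) (fun _ => (1:ENNReal)) x else 0 with hF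
      have hNF : ∀ k < m, N (F k) = (lam k : ENNReal) := by
        intro k hk
        have hNB0 : N (Set.indicator (Bf k) fun _ => 1) ≠ 0 := (hBpos _ (hBf k)).ne'
        have hNBT : N (Set.indicator (Bf k) fun _ => 1) ≠ ⊤ := (hBfin _ (hBf k)).ne
        have hcne : ((lam k : ENNReal) / N (Set.indicator (Bf k) fun _ => 1)) ≠ ⊤ :=
          (ENNReal.div_lt_top ENNReal.coe_ne_top hNB0).ne
        have : F k = fun x => ((lam k : ENNReal) / N (Set.indicator (Bf k) fun _ => 1)) *
            Set.indicator (Bf k) (fun _ => (1:ENNReal)) x := by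
          funext x; simp [hF, hk]
        rw [this, hhom _ _ hcne, ENNReal.div_mul_cancel hNB0 hNBT]
      have hFW : ∀ x, ∑' k, F k x ≤ W x := by
        intro x
        have htsum : ∑' k, F k x = ∑ k ∈ Finset.range m, F k x := by
          refine tsum_eq_sum fun k hk => ?_
          simp only [Finset.mem_range, not_lt] at hk
          simp [hF, Nat.not_lt.mpr hk]
        rw [htsum, hW]
        have hpt : ∀ k ∈ Finset.range m, (F k x) ^ s ≤ camWeight s N (Bf k) (lam k) x := by
          intro k hk
          rw [Finset.mem_range] at hk
          simp only [hF, hk, if_true, camWeight]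
          by_cases hx : x ∈ Bf k
          · simp [Set.indicator_of_mem hx]
          · simp [Set.indicator_of_notMem hx, ENNReal.zero_rpow_of_pos hs]
        calc ∑ k ∈ Finset.range m, F k x
            ≤ (∑ k ∈ Finset.range m, (F k x) ^ s) ^ (1 / s) :=
              aux_sum_le_rpow hs hs1 _ m
          _ ≤ (∑ i ∈ Finset.range m, camWeight s N (Bf i) (lam i) x) ^ (1 / s) :=
              ENNReal.rpow_le_rpow (Finset.sum_le_sum hpt) (by positivity)
      have hlam : (∑ j ∈ Finset.range m, (lam j : ENNReal)) ≤ Cc * N W := by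
        calc ∑ j ∈ Finset.range m, (lam j : ENNReal)
            = ∑ j ∈ Finset.range m, N (F j) := by
              refine Finset.sum_congr rfl fun j hj => ?_
              rw [hNF j (Finset.mem_range.mp hj)]
          _ ≤ ∑' k, N (F k) := ENNReal.sum_le_tsum _
          _ ≤ Cc * N (fun x => ∑' k, F k x) := hCc F
          _ ≤ Cc * N W := mul_le_mul_right (hmono _ _ (Filter.Eventually.of_forall hFW)) _
      calc (N W)⁻¹ * ∑ j ∈ Finset.range m, camTerm q N f P (Bf j) (lam j)
          ≤ (N W)⁻¹ * ((∑ j ∈ Finset.range m, (lam j : ENNReal)) * NP) :=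
            mul_le_mul_right hsum _
        _ ≤ (N W)⁻¹ * (Cc * N W * NP) := by
            exact mul_le_mul_right (mul_le_mul_left hlam _) _
        _ = (N W)⁻¹ * N W * Cc * NP := by ring
        _ ≤ 1 * Cc * NP := by
            exact mul_le_mul_left (mul_le_mul_left (ENNReal.inv_mul_le_one _) _) _
        _ = Cc * NP := by rw [one_mul]
    calc camNormWeighted q s N Balls f P ≤ Cc * camNormPlain q N Balls f P := hmain
      _ ≤ max 1 Cc * camNormPlain q N Balls f P :=
          mul_le_mul_left (le_max_right _ _) _
end
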